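/- Let N be a finite set of n units, ℋ a sub-σ-algebra, and let G∘ = (N, E∘) (the true causal graph) and G = (N, E_G) (the proxy graph) be directed graphs without self-loops, with in-neighborhoods N∘(i) and N_G(i). Suppose Y_{j,0}, Y_{i,1} are {0,1}-valued random variables, and for each ij ∈ E∘ there are {0,1}-valued random variables Y*_{ij}(1), Y*_{ij}(0) satisfying Y_{i,1}·Y_{j,0} = Y*_{ij}(1)·Y_{j,0} and Y_{i,1}·(1−Y_{j,0}) = Y*_{ij}(0)·(1−Y_{j,0}) almost surely, with (Y*_{ij}(1), Y*_{ij}(0)) conditionally independent of Y_{j,0} given ℋ. Assume further: (a) for every ij ∈ E_G \ E∘, Cov(Y_{i,1}, Y_{j,0} | ℋ) = 0 almost surely; (b) (nonnegative spillover) for every j ∈ N, Σ_{i: ij ∈ E∘\E_G} (Y*_{ij}(1) − Y*_{ij}(0)) ≥ 0 almost surely; (c) v² = (1/n)Σ_{j∈N} μ_{j,0}(1−μ_{j,0}) > 0 almost surely, where μ_{j,0} = E[Y_{j,0}|ℋ]. Then, almost surely, D ≥ C_G, where D = Σ_{j∈N} w_j Σ_{i: ij∈E∘} E[Y*_{ij}(1)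 − Y*_{ij}(0) | ℋ] with weights w_j = μ_{j,0}(1−μ_{j,0})/(n v²), and C_G = (1/(n v²)) Σ_{ij∈E_G} Cov(Y_{i,1}, Y_{j,0} | ℋ). -/

import Mathlib

open MeasureTheory ProbabilityTheory

/-- Conditional covariance of two real random variables given a sub-σ-algebra `m`. -/
noncomputable def condCov {Ω : Type*} {m0 : MeasurableSpace Ω} (μ : Measure Ω)
    (m : MeasurableSpace Ω) (X Y : Ω → ℝ) : Ω → ℝ :=
  fun ω => (μ[fun ω' => X ω' * Y ω' | m]) ω - (μ[X | m]) ω * (μ[Y | m]) ω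

lemma integrable01 {Ω : Type*} [mΩ : MeasurableSpace Ω] (μ : Measure Ω) [IsProbabilityMeasure μ]
    {X : Ω → ℝ} (hm : Measurable X) (hb : ∀ ω, X ω = 0 ∨ X ω = 1) : Integrable X μ :=
  ⟨hm.aestronglyMeasurable, HasFiniteIntegral.of_bounded (C := 1)
    (Filter.Eventually.of_forall fun ω => by rcases hb ω with h | h <;> simp [h])⟩

lemma condexp_mul01 {Ω : Type*} [mΩ : MeasurableSpace Ω] [StandardBorelSpace Ω]
    (μ : Measure Ω) [IsProbabilityMeasure μ]
    {X Y : Ω → ℝ} (hXm : Measurable X) (hYm : Measurable Y)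
    (hXb : ∀ ω, X ω = 0 ∨ X ω = 1) (hYb : ∀ ω, Y ω = 0 ∨ Y ω = 1)
    (H : MeasurableSpace Ω) (hH : H ≤ mΩ)
    (hind : CondIndepFun H hH X Y μ) :
    μ[fun ω => X ω * Y ω | H] =ᵐ[μ] fun ω => (μ[X|H]) ω * (μ[Y|H]) ω := by
  have key := (condIndepFun_iff_condExp_inter_preimage_eq_mul (hm' := hH) hXm hYm).mp hind
      {1} {1} (measurableSet_singleton 1) (measurableSet_singleton 1)
  have hXe : X =ᵐ[μ] (X ⁻¹' {1}).indicator (fun _ => (1:ℝ)) :=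
    Filter.Eventually.of_forall fun ω => by
      rcases hXb ω with h | h <;> simp [Set.indicator_apply, Set.mem_preimage, h]
  have hYe : Y =ᵐ[μ] (Y ⁻¹' {1}).indicator (fun _ => (1:ℝ)) :=
    Filter.Eventually.of_forall fun ω => by
      rcases hYb ω with h | h <;> simp [Set.indicator_apply, Set.mem_preimage, h]
  have hXYe : (fun ω => X ω * Y ω) =ᵐ[μ] ((X ⁻¹' {1}) ∩ (Y ⁻¹' {1})).indicator (fun _ => (1:ℝ)) :=
    Filter.Eventually.of_forall fun ω => by
      rcases hXb ω with h | h <;> rcases hYb ω with h' | h' <;>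
        simp [Set.indicator_apply, Set.mem_preimage, h, h']
  refine (condExp_congr_ae hXYe).trans (key.trans ?_)
  filter_upwards [condExp_congr_ae (m := H) hXe.symm, condExp_congr_ae (m := H) hYe.symm]
    with ω h1 h2
  rw [h1, h2]

lemma sum_pairs {N : Type*} [Fintype N] [DecidableEq N] (S : Finset (N × N)) (f : N → N → ℝ) :
    ∑ e ∈ S, f e.1 e.2 = ∑ j, ∑ i ∈ Finset.univ.filter (fun i => (i, j) ∈ S), f i j := by
  have h : ∑ e ∈ S, f e.1 e.2 = ∑ e : N × N, if e ∈ S then f e.1 e.2 else 0 := by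
    rw [Finset.sum_ite_mem, Finset.univ_inter]
  rw [h, Fintype.sum_prod_type, Finset.sum_comm]
  simp [Finset.sum_filter]

lemma final_alg {N : Type*} [Fintype N] [DecidableEq N] (E0 EG : Finset (N × N))
    (q : N → ℝ) (d : N → N → ℝ) (cov : N × N → ℝ) (n : ℝ)
    (hq : ∀ j, 0 ≤ q j)
    (hcov : ∀ p ∈ E0, cov p = q p.2 * d p.1 p.2)
    (hzero : ∀ p ∈ EG \ E0, cov p = 0)
    (hspill : ∀ j, 0 ≤ ∑ i ∈ Finset.univ.filter (fun i => (i, j) ∈ E0 \ EG), d i j)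
    (hv : 0 < (1 / n) * ∑ l, q l) :
    (1 / (n * ((1 / n) * ∑ l, q l))) * ∑ e ∈ EG, cov e
      ≤ ∑ j, (q j / (n * ((1 / n) * ∑ l, q l)))
          * ∑ i ∈ Finset.univ.filter (fun i => (i, j) ∈ E0), d i j := by
  have hs : 0 ≤ ∑ l, q l := Finset.sum_nonneg fun l _ => hq l
  have hn : 0 < n := by
    rcases lt_trichotomy n 0 with h | h | h
    · exfalso; nlinarith [one_div_neg.mpr h]
    · exfalso; rw [h] at hv; simp at hv
    · exact h
  have hc : 0 < n * ((1 / n) * ∑ l, q l) := mul_pos hn hv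
  have hsplitEG : ∑ e ∈ EG, cov e = ∑ e ∈ EG ∩ E0, cov e := by
    rw [← Finset.sum_inter_add_sum_sdiff EG E0 cov, Finset.sum_eq_zero hzero, add_zero]
  have hval : ∑ e ∈ EG ∩ E0, cov e
      = ∑ j, q j * ∑ i ∈ Finset.univ.filter (fun i => (i, j) ∈ EG ∩ E0), d i j :=
    calc ∑ e ∈ EG ∩ E0, cov e = ∑ e ∈ EG ∩ E0, q e.2 * d e.1 e.2 :=
          Finset.sum_congr rfl fun e he => hcov e (Finset.mem_inter.mp he).2
    _ = ∑ j, ∑ i ∈ Finset.univ.filter (fun i => (i, j) ∈ EG ∩ E0), q j * d i j :=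
          sum_pairs (EG ∩ E0) (fun i j => q j * d i j)
    _ = ∑ j, q j * ∑ i ∈ Finset.univ.filter (fun i => (i, j) ∈ EG ∩ E0), d i j :=
          Finset.sum_congr rfl fun j _ => (Finset.mul_sum _ _ _).symm
  have hsplit : ∀ j : N,
      ∑ i ∈ Finset.univ.filter (fun i => (i, j) ∈ E0), d i j
      = (∑ i ∈ Finset.univ.filter (fun i => (i, j) ∈ EG ∩ E0), d i j)
        + ∑ i ∈ Finset.univ.filter (fun i => (i, j) ∈ E0 \ EG), d i j := by
    intro j
    rw [← Finset.sum_filter_add_sum_filter_not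
      (Finset.univ.filter (fun i => (i, j) ∈ E0)) (fun i => (i, j) ∈ EG)
      (fun i => d i j), Finset.filter_filter, Finset.filter_filter]
    congr 1
    · refine Finset.sum_congr (Finset.filter_congr fun i _ => ?_) fun _ _ => rfl
      first | (simp only [Finset.mem_inter]; tauto) | simp only [Finset.mem_inter, and_comm]
    · refine Finset.sum_congr (Finset.filter_congr fun i _ => ?_) fun _ _ => rfl
      first | (simp only [Finset.mem_sdiff]; tauto) | simp only [Finset.mem_sdiff]
  have hkey : ∑ e ∈ EG, cov e
      ≤ ∑ j, q j * ∑ i ∈ Finset.univ.filter (fun i => (i, j) ∈ E0), d i j := by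
    rw [hsplitEG, hval]
    refine Finset.sum_le_sum fun j _ => ?_
    rw [hsplit j, mul_add, le_add_iff_nonneg_right]
    exact mul_nonneg (hq j) (hspill j)
  calc (1 / (n * ((1 / n) * ∑ l, q l))) * ∑ e ∈ EG, cov e
      ≤ (1 / (n * ((1 / n) * ∑ l, q l)))
          * ∑ j, q j * ∑ i ∈ Finset.univ.filter (fun i => (i, j) ∈ E0), d i j :=
        mul_le_mul_of_nonneg_left hkey (by positivity)
    _ = ∑ j, (q j / (n * ((1 / n) * ∑ l, q l)))
          * ∑ i ∈ Finset.univ.filter (fun i => (i, j) ∈ E0), d i j := by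
        rw [Finset.mul_sum]
        exact Finset.sum_congr rfl fun j _ => by ring

/-- first inequality of Lemma 2.2 of He–Song, "Measuring Diffusion over a
Large Network".  When the true causal graph `G∘ = (N, E∘)` is latent and only a proxy
graph `G = (N, E_G)` is observed, under the unconfoundedness condition, the requirement
that covariances vanish along proxy edges that are not causal edges, and the nonnegative
spillover condition, the observable covariance measure `C_G` is a lower bound for the
diffusion `D` almost surely.  An edge `(i, j)` represents a causal link from `Y_{j,0}`
to `Y_{i,1}`, so in-neighborhoods are `N∘(i) = {j : (i,j) ∈ E∘}`, `N_G(i) = {j : (i,j) ∈ E_G}`. -/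
theorem stmt4 {Ω : Type*} [mΩ : MeasurableSpace Ω] [StandardBorelSpace Ω]
    (μ : Measure Ω) [IsProbabilityMeasure μ]
    {N : Type*} [Fintype N] [DecidableEq N]
    (E0 EG : Finset (N × N)) (hE0 : ∀ e ∈ E0, e.1 ≠ e.2) (hEG : ∀ e ∈ EG, e.1 ≠ e.2)
    (Y0 Y1 : N → Ω → ℝ) (Ys1 Ys0 : N → N → Ω → ℝ)
    (hY0m : ∀ j, Measurable (Y0 j)) (hY1m : ∀ i, Measurable (Y1 i))
    (hYs1m : ∀ i j, (i, j) ∈ E0 → Measurable (Ys1 i j))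
    (hYs0m : ∀ i j, (i, j) ∈ E0 → Measurable (Ys0 i j))
    (hY0b : ∀ j ω, Y0 j ω = 0 ∨ Y0 j ω = 1)
    (hY1b : ∀ i ω, Y1 i ω = 0 ∨ Y1 i ω = 1)
    (hYs1b : ∀ i j, (i, j) ∈ E0 → ∀ ω, Ys1 i j ω = 0 ∨ Ys1 i j ω = 1)
    (hYs0b : ∀ i j, (i, j) ∈ E0 → ∀ ω, Ys0 i j ω = 0 ∨ Ys0 i j ω = 1)
    (H : MeasurableSpace Ω) (hH : H ≤ mΩ)
    -- consistency relations along causal edges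
    (hcons1 : ∀ i j, (i, j) ∈ E0 →
      ∀ᵐ ω ∂μ, Y1 i ω * Y0 j ω = Ys1 i j ω * Y0 j ω)
    (hcons0 : ∀ i j, (i, j) ∈ E0 →
      ∀ᵐ ω ∂μ, Y1 i ω * (1 - Y0 j ω) = Ys0 i j ω * (1 - Y0 j ω))
    -- unconfoundedness along causal edges
    (hindep : ∀ i j, (i, j) ∈ E0 →
      CondIndepFun H hH (fun ω => (Ys1 i j ω, Ys0 i j ω)) (Y0 j) μ)
    -- (a) vanishing covariance along non-causal proxy edges
    (hzero : ∀ i j, (i, j) ∈ EG \ E0 →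
      condCov μ H (Y1 i) (Y0 j) =ᵐ[μ] 0)
    -- (b) nonnegative spillover on the missed causal edges
    (hmono : ∀ j : N, ∀ᵐ ω ∂μ,
      0 ≤ ∑ i ∈ Finset.univ.filter (fun i => (i, j) ∈ E0 \ EG),
            (Ys1 i j ω - Ys0 i j ω))
    -- (c) the aggregated overlap condition `v² > 0` a.s.
    (hv : ∀ᵐ ω ∂μ,
      0 < (1 / (Fintype.card N : ℝ)) *
            ∑ j, (μ[Y0 j | H]) ω * (1 - (μ[Y0 j | H]) ω)) :
    ∀ᵐ ω ∂μ,
      -- C_G ≤ D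
      (1 / ((Fintype.card N : ℝ) *
            ((1 / (Fintype.card N : ℝ)) *
              ∑ l, (μ[Y0 l | H]) ω * (1 - (μ[Y0 l | H]) ω))))
          * ∑ e ∈ EG, condCov μ H (Y1 e.1) (Y0 e.2) ω
        ≤ ∑ j, ((μ[Y0 j | H]) ω * (1 - (μ[Y0 j | H]) ω)
              / ((Fintype.card N : ℝ) *
                  ((1 / (Fintype.card N : ℝ)) *
                    ∑ l, (μ[Y0 l | H]) ω * (1 - (μ[Y0 l | H]) ω))))
            * ∑ i ∈ Finset.univ.filter (fun i => (i, j) ∈ E0),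
                (μ[fun ω' => Ys1 i j ω' - Ys0 i j ω' | H]) ω := by
  letI : MeasurableSpace Ω := mΩ
  -- integrability
  have hY0i : ∀ j, Integrable (Y0 j) μ := fun j => integrable01 μ (hY0m j) (hY0b j)
  have hYs1i : ∀ i j, (i, j) ∈ E0 → Integrable (Ys1 i j) μ :=
    fun i j h => integrable01 μ (hYs1m i j h) (hYs1b i j h)
  have hYs0i : ∀ i j, (i, j) ∈ E0 → Integrable (Ys0 i j) μ :=
    fun i j h => integrable01 μ (hYs0m i j h) (hYs0b i j h)
  -- component-wise conditional independence
  have hind1 : ∀ i j, (i, j) ∈ E0 → CondIndepFun H hH (Ys1 i j) (Y0 j) μ := fun i j hij =>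
    (hindep i j hij).comp measurable_fst measurable_id
  have hind0 : ∀ i j, (i, j) ∈ E0 → CondIndepFun H hH (Ys0 i j) (Y0 j) μ := fun i j hij =>
    (hindep i j hij).comp measurable_snd measurable_id
  -- the conditional covariance formula along causal edges
  have hcov : ∀ i j, (i, j) ∈ E0 → condCov μ H (Y1 i) (Y0 j) =ᵐ[μ]
      fun ω => ((μ[Y0 j | H]) ω * (1 - (μ[Y0 j | H]) ω)) *
        ((μ[Ys1 i j | H]) ω - (μ[Ys0 i j | H]) ω) := by
    intro i j hij
    have hA2 : μ[fun ω => Ys1 i j ω * Y0 j ω | H] =ᵐ[μ]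
        fun ω => (μ[Ys1 i j | H]) ω * (μ[Y0 j | H]) ω :=
      condexp_mul01 μ (hYs1m i j hij) (hY0m j) (hYs1b i j hij) (hY0b j) H hH (hind1 i j hij)
    have hA : μ[fun ω => Y1 i ω * Y0 j ω | H] =ᵐ[μ]
        fun ω => (μ[Ys1 i j | H]) ω * (μ[Y0 j | H]) ω :=
      (condExp_congr_ae (hcons1 i j hij)).trans hA2
    have hB : μ[fun ω => Ys0 i j ω * Y0 j ω | H] =ᵐ[μ]
        fun ω => (μ[Ys0 i j | H]) ω * (μ[Y0 j | H]) ω :=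
      condexp_mul01 μ (hYs0m i j hij) (hY0m j) (hYs0b i j hij) (hY0b j) H hH (hind0 i j hij)
    have hY1eq : Y1 i =ᵐ[μ]
        fun ω => Ys1 i j ω * Y0 j ω + (Ys0 i j ω - Ys0 i j ω * Y0 j ω) := by
      filter_upwards [hcons1 i j hij, hcons0 i j hij] with ω h1 h0
      linear_combination h1 + h0
    have hint1 : Integrable (fun ω => Ys1 i j ω * Y0 j ω) μ :=
      integrable01 μ ((hYs1m i j hij).mul (hY0m j)) (fun ω => by
        rcases hYs1b i j hij ω with h | h <;> rcases hY0b j ω with h' | h' <;> simp [h, h'])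
    have hint0 : Integrable (fun ω => Ys0 i j ω * Y0 j ω) μ :=
      integrable01 μ ((hYs0m i j hij).mul (hY0m j)) (fun ω => by
        rcases hYs0b i j hij ω with h | h <;> rcases hY0b j ω with h' | h' <;> simp [h, h'])
    have hC : μ[Y1 i | H] =ᵐ[μ]
        fun ω => (μ[Ys1 i j | H]) ω * (μ[Y0 j | H]) ω +
          ((μ[Ys0 i j | H]) ω - (μ[Ys0 i j | H]) ω * (μ[Y0 j | H]) ω) := by
      refine (condExp_congr_ae hY1eq).trans ?_
      have hfg : (fun ω => Ys1 i j ω * Y0 j ω + (Ys0 i j ω - Ys0 i j ω * Y0 j ω))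
          = (fun ω => Ys1 i j ω * Y0 j ω)
            + ((Ys0 i j) - fun ω => Ys0 i j ω * Y0 j ω) := rfl
      rw [hfg]
      refine (condExp_add hint1 ((hYs0i i j hij).sub hint0) H).trans ?_
      filter_upwards [hA2, hB, condExp_sub (μ := μ) (m := H) (hYs0i i j hij) hint0]
        with ω h1 h2 h3
      simp only [Pi.add_apply]
      rw [h3]
      simp only [Pi.sub_apply]
      rw [h1, h2]
    filter_upwards [hA, hC] with ω hAω hCω
    simp only [condCov]
    rw [hAω, hCω]
    ring
  -- conditional expectation of differences
  have hsub : ∀ i j, (i, j) ∈ E0 →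
      μ[fun ω' => Ys1 i j ω' - Ys0 i j ω' | H] =ᵐ[μ]
        fun ω => (μ[Ys1 i j | H]) ω - (μ[Ys0 i j | H]) ω := by
    intro i j hij
    have hfg : (fun ω' => Ys1 i j ω' - Ys0 i j ω') = Ys1 i j - Ys0 i j := rfl
    rw [hfg]
    filter_upwards [condExp_sub (μ := μ) (m := H) (hYs1i i j hij) (hYs0i i j hij)] with ω h
    simpa using h
  -- bundled version
  have Hsub : ∀ᵐ ω ∂μ, ∀ p : N × N, p ∈ E0 →
      (μ[fun ω' => Ys1 p.1 p.2 ω' - Ys0 p.1 p.2 ω' | H]) ω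
        = (μ[Ys1 p.1 p.2 | H]) ω - (μ[Ys0 p.1 p.2 | H]) ω := by
    rw [ae_all_iff]
    intro p
    by_cases hp : p ∈ E0
    · filter_upwards [hsub p.1 p.2 hp] with ω h
      exact fun _ => h
    · exact Filter.Eventually.of_forall fun ω h => absurd h hp
  -- spillover nonnegativity for the conditional expectations
  have hspill : ∀ j : N, ∀ᵐ ω ∂μ,
      0 ≤ ∑ i ∈ Finset.univ.filter (fun i => (i, j) ∈ E0 \ EG),
          ((μ[Ys1 i j | H]) ω - (μ[Ys0 i j | H]) ω) := by
    intro j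
    have hmem : ∀ i ∈ Finset.univ.filter (fun i => (i, j) ∈ E0 \ EG), (i, j) ∈ E0 := by
      intro i hi
      simp only [Finset.mem_filter, Finset.mem_sdiff] at hi
      exact hi.2.1
    have h1 : (0 : Ω → ℝ) ≤ᵐ[μ]
        μ[fun ω => ∑ i ∈ Finset.univ.filter (fun i => (i, j) ∈ E0 \ EG),
            (Ys1 i j ω - Ys0 i j ω) | H] :=
      condExp_nonneg (hmono j)
    have hfg : (fun ω => ∑ i ∈ Finset.univ.filter (fun i => (i, j) ∈ E0 \ EG),
        (Ys1 i j ω - Ys0 i j ω))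
        = ∑ i ∈ Finset.univ.filter (fun i => (i, j) ∈ E0 \ EG),
            (fun ω => Ys1 i j ω - Ys0 i j ω) := by
      funext ω; rw [Finset.sum_apply]
    have h2 := condExp_finsetSum (μ := μ) (m := H)
        (s := Finset.univ.filter (fun i => (i, j) ∈ E0 \ EG))
        (f := fun i => fun ω => Ys1 i j ω - Ys0 i j ω)
        (fun i hi => (hYs1i i j (hmem i hi)).sub (hYs0i i j (hmem i hi)))
    filter_upwards [h1, h2, Hsub] with ω h1ω h2ω hsubω
    calc (0:ℝ)
        ≤ (μ[fun ω => ∑ i ∈ Finset.univ.filter (fun i => (i, j) ∈ E0 \ EG),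
            (Ys1 i j ω - Ys0 i j ω) | H]) ω := h1ω
      _ = (∑ i ∈ Finset.univ.filter (fun i => (i, j) ∈ E0 \ EG),
            μ[fun ω => Ys1 i j ω - Ys0 i j ω | H]) ω := by rw [hfg]; exact h2ω
      _ = ∑ i ∈ Finset.univ.filter (fun i => (i, j) ∈ E0 \ EG),
            (μ[fun ω => Ys1 i j ω - Ys0 i j ω | H]) ω := Finset.sum_apply _ _ _
      _ = ∑ i ∈ Finset.univ.filter (fun i => (i, j) ∈ E0 \ EG),
            ((μ[Ys1 i j | H]) ω - (μ[Ys0 i j | H]) ω) :=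
          Finset.sum_congr rfl fun i hi => hsubω (i, j) (hmem i hi)
  -- the conditional mean lies in [0,1]
  have hm01 : ∀ j : N, ∀ᵐ ω ∂μ, 0 ≤ (μ[Y0 j | H]) ω ∧ (μ[Y0 j | H]) ω ≤ 1 := by
    intro j
    have h0 : (0 : Ω → ℝ) ≤ᵐ[μ] μ[Y0 j | H] :=
      condExp_nonneg (Filter.Eventually.of_forall fun ω => by
        rcases hY0b j ω with h | h <;> simp [h])
    have h1 : μ[Y0 j | H] ≤ᵐ[μ] fun _ => (1:ℝ) := by
      have := condExp_mono (μ := μ) (m := H) (hY0i j) (integrable_const (1:ℝ))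
        (Filter.Eventually.of_forall fun ω => by
          rcases hY0b j ω with h | h <;> simp [h])
      rwa [condExp_const hH (1:ℝ)] at this
    filter_upwards [h0, h1] with ω hω h1ω
    exact ⟨hω, h1ω⟩
  -- bundled a.e. facts
  have Hcov : ∀ᵐ ω ∂μ, ∀ p : N × N, p ∈ E0 →
      condCov μ H (Y1 p.1) (Y0 p.2) ω
        = ((μ[Y0 p.2 | H]) ω * (1 - (μ[Y0 p.2 | H]) ω)) *
            ((μ[Ys1 p.1 p.2 | H]) ω - (μ[Ys0 p.1 p.2 | H]) ω) := by
    rw [ae_all_iff]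
    intro p
    by_cases hp : p ∈ E0
    · filter_upwards [hcov p.1 p.2 hp] with ω h
      exact fun _ => h
    · exact Filter.Eventually.of_forall fun ω h => absurd h hp
  have Hzero : ∀ᵐ ω ∂μ, ∀ p : N × N, p ∈ EG \ E0 →
      condCov μ H (Y1 p.1) (Y0 p.2) ω = 0 := by
    rw [ae_all_iff]
    intro p
    by_cases hp : p ∈ EG \ E0
    · filter_upwards [hzero p.1 p.2 hp] with ω h
      exact fun _ => h
    · exact Filter.Eventually.of_forall fun ω h => absurd h hp
  have Hspill : ∀ᵐ ω ∂μ, ∀ j : N,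
      0 ≤ ∑ i ∈ Finset.univ.filter (fun i => (i, j) ∈ E0 \ EG),
          ((μ[Ys1 i j | H]) ω - (μ[Ys0 i j | H]) ω) := by
    rw [ae_all_iff]; exact hspill
  have Hm01 : ∀ᵐ ω ∂μ, ∀ j : N, 0 ≤ (μ[Y0 j | H]) ω ∧ (μ[Y0 j | H]) ω ≤ 1 := by
    rw [ae_all_iff]; exact hm01
  -- pointwise conclusion
  filter_upwards [Hcov, Hzero, Hsub, Hspill, Hm01, hv]
    with ω hcovω hzeroω hsubω hspillω hm01ω hvω
  refine le_trans (final_alg E0 EG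
      (fun j => (μ[Y0 j | H]) ω * (1 - (μ[Y0 j | H]) ω))
      (fun i j => (μ[Ys1 i j | H]) ω - (μ[Ys0 i j | H]) ω)
      (fun p => condCov μ H (Y1 p.1) (Y0 p.2) ω)
      (Fintype.card N : ℝ)
      (fun j => mul_nonneg (hm01ω j).1 (by linarith [(hm01ω j).2]))
      (fun p hp => hcovω p hp)
      (fun p hp => hzeroω p hp)
      hspillω hvω) (le_of_eq ?_)
  refine Finset.sum_congr rfl fun j _ => ?_
  congr 1
  exact Finset.sum_congr rfl fun i hi =>
    (hsubω (i, j) ((Finset.mem_filter.mp hi).2)).symm
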